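/- Let w ∈ S_n and let x = (x_1,…,x_n) ∈ c(Λ_w). Then x is the coordinatewise maximum (join) of the elements b_{i,x_i}(w) taken over all i ∈ {1,…,n} with x_i > 0. -/
import Mathlib


/-- The inversion set of `w`: pairs of positions `(i,j)` with `i < j` and `w i > w j`. -/
def Invs {n : ℕ} (w : Equiv.Perm (Fin n)) : Finset (Fin n × Fin n) :=
  Finset.univ.filter (fun p => p.1 < p.2 ∧ w p.2 < w p.1)

/-- The length (number of inversions) of `w`. -/
def len {n : ℕ} (w : Equiv.Perm (Fin n)) : ℕ := (Invs w).card

/-- The `i`-th entry of the Lehmer code of `w`. -/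
def lehmer {n : ℕ} (w : Equiv.Perm (Fin n)) (i : Fin n) : ℕ :=
  ((Invs w).filter (fun p => p.1 = i)).card

/-- The extended Lehmer code `m_{i,j}(w)`: the number of inversions `(i,k)` with `k < j`. -/
def mext {n : ℕ} (w : Equiv.Perm (Fin n)) (i : Fin n) (j : Fin (n + 1)) : ℕ :=
  ((Invs w).filter (fun p => p.1 = i ∧ (p.2 : ℕ) < (j : ℕ))).card

/-- The left weak order: `v ≤_L w` iff `inv(v) ⊆ inv(w)`. -/
def leftWeak {n : ℕ} (v w : Equiv.Perm (Fin n)) : Prop := Invs v ⊆ Invs w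

/-- The value of `w` extended to `Fin (n+1)` by fixing the last point
(the `1`-indexed convention `w(n+1) = n+1` becomes `wval w n = n` here). -/
def wval {n : ℕ} (w : Equiv.Perm (Fin n)) (j : Fin (n + 1)) : ℕ :=
  if h : (j : ℕ) < n then (w ⟨j, h⟩ : ℕ) else n

/-- The set of non-inversions of `w`: pairs `(i,j)` with `i ≤ j ≤ n+1` and `w i ≤ w j`,
where `w` is extended by fixing the last point. -/
def Ninvs {n : ℕ} (w : Equiv.Perm (Fin n)) : Finset (Fin n × Fin (n + 1)) :=
  Finset.univ.filter (fun p => (p.1 : ℕ) ≤ (p.2 : ℕ) ∧ (w p.1 : ℕ) ≤ wval w p.2)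

/-- The set of Lehmer codes of elements of the weak order interval `Λ_w = [id, w]`. -/
def codeSet {n : ℕ} (w : Equiv.Perm (Fin n)) : Set (Fin n → ℕ) :=
  {x | ∃ v : Equiv.Perm (Fin n), leftWeak v w ∧ lehmer v = x}

/-- The tuple `b_{i,x}(w)`: the `j`-th coordinate is `0` if `j < i` or `(i,j) ∈ inv(w)`,
and is `max {0, x - m_{i,j}(w)}` (truncated subtraction) if `j ≥ i` and `(i,j) ∈ ninv(w)`. -/
def bmin {n : ℕ} (w : Equiv.Perm (Fin n)) (i : Fin n) (x : ℕ) : Fin n → ℕ :=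
  fun j => if (i : ℕ) ≤ (j : ℕ) ∧ (w i : ℕ) ≤ (w j : ℕ) then x - mext w i j.castSucc else 0

/-- The set `M_w` of all `b_{i,x}(w)` for `1 ≤ x ≤ c_i(w)`. -/
def Mset {n : ℕ} (w : Equiv.Perm (Fin n)) : Set (Fin n → ℕ) :=
  {z | ∃ (i : Fin n) (x : ℕ), 1 ≤ x ∧ x ≤ lehmer w i ∧ z = bmin w i x}

/-- The direct sum `v × w ∈ S_{m+n}` of permutations. -/
def dsum {m n : ℕ} (v : Equiv.Perm (Fin m)) (w : Equiv.Perm (Fin n)) :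
    Equiv.Perm (Fin (m + n)) :=
  finSumFinEquiv.permCongr (Equiv.sumCongr v w)

lemma mem_Invs {n : ℕ} (w : Equiv.Perm (Fin n)) (p : Fin n × Fin n) :
    p ∈ Invs w ↔ p.1 < p.2 ∧ w p.2 < w p.1 := by
  simp [Invs]

lemma lehmer_eq {n : ℕ} (v : Equiv.Perm (Fin n)) (i : Fin n) :
    lehmer v i = (Finset.univ.filter (fun k : Fin n => i < k ∧ v k < v i)).card := by
  unfold lehmer
  apply Finset.card_bij (fun p _ => p.2)
  · intro p hp
    simp only [Finset.mem_filter, mem_Invs, Finset.mem_univ, true_and] at hp ⊢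
    obtain ⟨⟨h1, h2⟩, h3⟩ := hp
    rw [h3] at h1 h2
    exact ⟨h1, h2⟩
  · intro p hp q hq h
    simp only [Finset.mem_filter] at hp hq
    exact Prod.ext (hp.2.trans hq.2.symm) h
  · intro k hk
    simp only [Finset.mem_filter, Finset.mem_univ, true_and] at hk
    exact ⟨(i, k), by simp [Finset.mem_filter, mem_Invs, hk.1, hk.2]⟩

lemma mext_eq {n : ℕ} (w : Equiv.Perm (Fin n)) (i j : Fin n) :
    mext w i j.castSucc =
      (Finset.univ.filter (fun k : Fin n => i < k ∧ w k < w i ∧ (k : ℕ) < (j : ℕ))).card := by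
  unfold mext
  apply Finset.card_bij (fun p _ => p.2)
  · intro p hp
    simp only [Finset.mem_filter, mem_Invs, Finset.mem_univ, true_and,
      Fin.coe_castSucc] at hp ⊢
    obtain ⟨⟨h1, h2⟩, h3, h4⟩ := hp
    rw [h3] at h1 h2
    exact ⟨h1, h2, h4⟩
  · intro p hp q hq h
    simp only [Finset.mem_filter] at hp hq
    exact Prod.ext (hp.2.1.trans hq.2.1.symm) h
  · intro k hk
    simp only [Finset.mem_filter, Finset.mem_univ, true_and] at hk
    refine ⟨(i, k), ?_, rfl⟩
    simp only [Finset.mem_filter, mem_Invs, Fin.coe_castSucc]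
    exact ⟨⟨hk.1, hk.2.1⟩, trivial, hk.2.2⟩

lemma mext_self {n : ℕ} (w : Equiv.Perm (Fin n)) (j : Fin n) :
    mext w j j.castSucc = 0 := by
  rw [mext_eq, Finset.card_eq_zero, Finset.filter_eq_empty_iff]
  intro k _
  rintro ⟨h1, _, h3⟩
  exact absurd h3 (not_lt.mpr (le_of_lt (Fin.lt_iff_val_lt_val.mp h1)))

lemma key_ineq {n : ℕ} {v w : Equiv.Perm (Fin n)} (hvw : Invs v ⊆ Invs w) {i j : Fin n}
    (hij : (i : ℕ) ≤ (j : ℕ)) (hw : (w i : ℕ) ≤ (w j : ℕ)) :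
    lehmer v i ≤ mext w i j.castSucc + lehmer v j := by
  rcases eq_or_lt_of_le hij with heq | hlt
  · have : i = j := Fin.ext heq
    subst this
    exact Nat.le_add_left _ _
  · have hijf : i < j := Fin.lt_iff_val_lt_val.mpr hlt
    have hnotinv : ¬ ((i, j) ∈ Invs v) := by
      intro hmem
      have := (mem_Invs w (i, j)).mp (hvw hmem)
      have : (w j : ℕ) < (w i : ℕ) := this.2
      omega
    rw [lehmer_eq, lehmer_eq, mext_eq]
    set s := Finset.univ.filter (fun k : Fin n => i < k ∧ v k < v i) with hs
    have hsplit := Finset.card_filter_add_card_filter_not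
      (s := s) (p := fun k : Fin n => (k : ℕ) < (j : ℕ))
    rw [← hsplit]
    apply Nat.add_le_add
    · apply Finset.card_le_card
      intro k hk
      simp only [hs, Finset.mem_filter, Finset.mem_univ, true_and] at hk ⊢
      obtain ⟨⟨h1, h2⟩, h3⟩ := hk
      have := (mem_Invs w (i, k)).mp (hvw ((mem_Invs v (i, k)).mpr ⟨h1, h2⟩))
      exact ⟨h1, this.2, h3⟩
    · apply Finset.card_le_card
      intro k hk
      simp only [hs, Finset.mem_filter, Finset.mem_univ, true_and, not_lt] at hk ⊢
      obtain ⟨⟨h1, h2⟩, h3⟩ := hk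
      have hkj : j < k := by
        rcases lt_or_eq_of_le h3 with h | h
        · exact Fin.lt_iff_val_lt_val.mpr h
        · exfalso
          have : j = k := Fin.ext h
          subst this
          exact hnotinv ((mem_Invs v (i, j)).mpr ⟨hijf, h2⟩)
      refine ⟨hkj, ?_⟩
      by_contra hc
      push_neg at hc
      have hvjk : v j < v i := lt_of_le_of_lt hc h2
      exact hnotinv ((mem_Invs v (i, j)).mpr ⟨hijf, hvjk⟩)

/-- Lemma 4.6: every `x ∈ c(Λ_w)` is the coordinatewise maximum (join) of the elements
`b_{i,x_i}(w)` over all `i` with `x_i > 0`. -/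
theorem bmin_decompose {n : ℕ} (w : Equiv.Perm (Fin n)) (x : Fin n → ℕ)
    (hx : x ∈ codeSet w) :
    x = (Finset.univ.filter (fun i : Fin n => 0 < x i)).sup
          (fun i => bmin w i (x i)) := by
  obtain ⟨v, hvw, hvx⟩ := hx
  subst hvx
  funext j
  rw [Finset.sup_apply]
  apply le_antisymm
  · rcases Nat.eq_zero_or_pos (lehmer v j) with h0 | hpos
    · simp [h0]
    · have hj : j ∈ Finset.univ.filter (fun i : Fin n => 0 < lehmer v i) := by
        simp [hpos]
      refine le_trans ?_ (Finset.le_sup hj)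
      simp [bmin, mext_self]
  · apply Finset.sup_le
    intro i _
    simp only [bmin]
    split_ifs with h
    · exact tsub_le_iff_left.mpr (key_ineq hvw h.1 h.2)
    · exact Nat.zero_le _
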